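/- Let k ≥ 1 and let nonnegative integers w₁, …, wₙ, c be given. Then there exist x₁, …, xₙ ∈ {0,1} with x₁w₁ + … + xₙwₙ = c if and only if there exist x₁, …, xₙ ∈ {0,1} with f(w₁)^{⊗x₁} ⊗ … ⊗ f(wₙ)^{⊗xₙ} = f(c) over the max-plus matrix semiring, where factors with xᵢ = 0 are omitted from the product and we require at least one xᵢ = 1 on both sides (equivalently, assume c > 0 or handle the empty product separately). -/

import Mathlib

/-- Max-plus matrix multiplication: `(A ⊗ B) i j = max_l (A i l + B l j)`. -/
def mpMul {k : ℕ} (A B : Matrix (Fin k) (Fin k) ℕ) : Matrix (Fin k) (Fin k) ℕ :=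
  fun i j => Finset.univ.sup fun l => A i l + B l j

/-- `fmat k a` is the `k × k` constant matrix all of whose entries equal `a`. -/
def fmat (k : ℕ) (a : ℕ) : Matrix (Fin k) (Fin k) ℕ := fun _ _ => a

/-- The max-plus product of a list of matrices (junk value `fmat k 0` on the empty list;
it is only used on nonempty lists). -/
def mpListProd {k : ℕ} : List (Matrix (Fin k) (Fin k) ℕ) → Matrix (Fin k) (Fin k) ℕ
  | [] => fmat k 0
  | A :: rest => rest.foldl mpMul A

/-- The max-plus product `⊗_{i ∈ S} f(wᵢ)` over a (nonempty) finite index set `S`,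
with the factors taken in increasing order of their indices. -/
def mpProdOver {k n : ℕ} (w : Fin n → ℕ) (S : Finset (Fin n)) :
    Matrix (Fin k) (Fin k) ℕ :=
  mpListProd ((S.sort (· ≤ ·)).map fun i => fmat k (w i))

lemma mpMul_fmat {k : ℕ} (hk : 1 ≤ k) (a b : ℕ) :
    mpMul (fmat k a) (fmat k b) = fmat k (a + b) := by
  have : Nonempty (Fin k) := ⟨⟨0, hk⟩⟩
  funext i j
  simp [mpMul, fmat, Finset.sup_const Finset.univ_nonempty]

lemma foldl_fmat {k : ℕ} (hk : 1 ≤ k) (l : List ℕ) (a : ℕ) :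
    (l.map (fmat k)).foldl mpMul (fmat k a) = fmat k (a + l.sum) := by
  induction l generalizing a with
  | nil => simp
  | cons b t ih =>
    simp only [List.map_cons, List.foldl_cons, mpMul_fmat hk, List.sum_cons, ih, add_assoc]

lemma fmat_inj {k : ℕ} (hk : 1 ≤ k) {a b : ℕ} (h : fmat k a = fmat k b) : a = b := by
  have := congrFun (congrFun h ⟨0, hk⟩) ⟨0, hk⟩
  simpa [fmat] using this

theorem ssp_reduction_maxplus {k n : ℕ} (hk : 1 ≤ k) (w : Fin n → ℕ) (c : ℕ) :
    (∃ S : Finset (Fin n), S.Nonempty ∧ ∑ i ∈ S, w i = c) ↔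
    (∃ S : Finset (Fin n), S.Nonempty ∧ mpProdOver (k := k) w S = fmat k c) := by
  have key : ∀ S : Finset (Fin n), S.Nonempty →
      mpProdOver (k := k) w S = fmat k (∑ i ∈ S, w i) := by
    intro S hS
    have hsum : ((S.sort (· ≤ ·)).map w).sum = ∑ i ∈ S, w i := by
      rw [← Finset.sum_map_toList]
      exact List.Perm.sum_eq ((Finset.sort_perm_toList S (· ≤ ·)).map w)
    have hne : S.sort (· ≤ ·) ≠ [] := by
      intro h
      have := Finset.length_sort (α := Fin n) (· ≤ ·) (s := S)
      rw [h] at this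
      simp at this
      exact hS.ne_empty (Finset.card_eq_zero.mp this.symm)
    obtain ⟨b, t, hbt⟩ := List.exists_cons_of_ne_nil hne
    unfold mpProdOver
    rw [hbt] at hsum ⊢
    simp only [List.map_cons, mpListProd]
    have : (t.map fun i => fmat k (w i)) = (t.map w).map (fmat k) := by
      simp [List.map_map, Function.comp]
    rw [this, foldl_fmat hk]
    simpa using congrArg (fmat k) hsum
  constructor
  · rintro ⟨S, hS, hc⟩
    exact ⟨S, hS, by rw [key S hS, hc]⟩
  · rintro ⟨S, hS, hc⟩
    refine ⟨S, hS, fmat_inj hk ?_⟩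
    rw [← key S hS, hc]
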